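/- For the asymmetric length-function distance, Env(A,B) = Env^out(A, S) ∩ Env^in(B, S) for every nonempty S ⊆ W(A,B), where Env(A,B) := {C | d(A,B) = d(A,C) + d(C,B)}, Env^out(A,S) := {C | S ⊆ W(A,C)}, and Env^in(B,S) := {C | S ⊆ W(C,B)}. -/

import Mathlib

/-- The maximal stretching factor `Λ(A,B)`. -/
noncomputable def lamStretch {X Γ : Type*} (ℓ : X → Γ → ℝ) (A B : X) : ℝ :=
  sSup (Set.range fun γ => ℓ B γ / ℓ A γ)

/-- The asymmetric distance `d(A,B) = log Λ(A,B)`. -/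
noncomputable def dLog {X Γ : Type*} (ℓ : X → Γ → ℝ) (A B : X) : ℝ :=
  Real.log (lamStretch ℓ A B)

/-- The set of witnesses from `A` to `B`. -/
def witnesses {X Γ : Type*} (ℓ : X → Γ → ℝ) (A B : X) : Set Γ :=
  {γ | ℓ B γ / ℓ A γ = lamStretch ℓ A B}

/-- The envelope from `A` to `B`. -/
def env {X Γ : Type*} (ℓ : X → Γ → ℝ) (A B : X) : Set X :=
  {C | dLog ℓ A B = dLog ℓ A C + dLog ℓ C B}

/-- The out-envelope of `A` in the directions `S`. -/
def envOut {X Γ : Type*} (ℓ : X → Γ → ℝ) (A : X) (S : Set Γ) : Set X :=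
  {C | S ⊆ witnesses ℓ A C}

/-- The in-envelope of `B` in the directions `S`. -/
def envIn {X Γ : Type*} (ℓ : X → Γ → ℝ) (B : X) (S : Set Γ) : Set X :=
  {C | S ⊆ witnesses ℓ C B}

/-- `Env(A,B) = Env^out(A,S) ∩ Env^in(B,S)` for every nonempty `S ⊆ W(A,B)`. -/
theorem stmt_17 {X Γ : Type*} [Nonempty Γ] (ℓ : X → Γ → ℝ)
    (hpos : ∀ A γ, 0 < ℓ A γ)
    (hatt : ∀ A B : X, ∃ γ : Γ, γ ∈ witnesses ℓ A B)
    (A B : X) (S : Set Γ) (hS : S.Nonempty) (hSW : S ⊆ witnesses ℓ A B) :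
    env ℓ A B = envOut ℓ A S ∩ envIn ℓ B S := by
  have hpos' : ∀ A B : X, ∀ γ, 0 < ℓ B γ / ℓ A γ := fun A B γ =>
    div_pos (hpos B γ) (hpos A γ)
  have hlam_pos : ∀ A B : X, 0 < lamStretch ℓ A B := by
    intro A B
    obtain ⟨γ, hγ⟩ := hatt A B
    rw [witnesses, Set.mem_setOf_eq] at hγ
    rw [← hγ]; exact hpos' A B γ
  have hbdd : ∀ A B : X, BddAbove (Set.range fun γ => ℓ B γ / ℓ A γ) := by
    intro A B
    by_contra h
    have h0 := Real.sSup_of_not_bddAbove h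
    have h1 := hlam_pos A B
    rw [lamStretch] at h1
    linarith
  have hle : ∀ A B : X, ∀ γ, ℓ B γ / ℓ A γ ≤ lamStretch ℓ A B := fun A B γ =>
    le_csSup (hbdd A B) ⟨γ, rfl⟩
  ext C
  simp only [env, envOut, envIn, Set.mem_setOf_eq, Set.mem_inter_iff, dLog]
  constructor
  · intro hd
    have hmul : lamStretch ℓ A B = lamStretch ℓ A C * lamStretch ℓ C B := by
      apply Real.log_injOn_pos (Set.mem_Ioi.mpr (hlam_pos A B))
        (Set.mem_Ioi.mpr (mul_pos (hlam_pos A C) (hlam_pos C B)))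
      rw [Real.log_mul (ne_of_gt (hlam_pos A C)) (ne_of_gt (hlam_pos C B))]
      exact hd
    constructor
    · intro γ hγ
      have hγAB : ℓ B γ / ℓ A γ = lamStretch ℓ A B := hSW hγ
      have hsplit : ℓ B γ / ℓ A γ = (ℓ C γ / ℓ A γ) * (ℓ B γ / ℓ C γ) := by
        field_simp [(hpos C γ).ne', (hpos A γ).ne']
      show ℓ C γ / ℓ A γ = lamStretch ℓ A C
      nlinarith [hle A C γ, hle C B γ, hpos' A C γ, hpos' C B γ,
        hlam_pos A C, hlam_pos C B]
    · intro γ hγ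
      have hγAB : ℓ B γ / ℓ A γ = lamStretch ℓ A B := hSW hγ
      have hsplit : ℓ B γ / ℓ A γ = (ℓ C γ / ℓ A γ) * (ℓ B γ / ℓ C γ) := by
        field_simp [(hpos C γ).ne', (hpos A γ).ne']
      show ℓ B γ / ℓ C γ = lamStretch ℓ C B
      nlinarith [hle A C γ, hle C B γ, hpos' A C γ, hpos' C B γ,
        hlam_pos A C, hlam_pos C B]
  · rintro ⟨hout, hin⟩
    obtain ⟨γ, hγ⟩ := hS
    have h1 : ℓ B γ / ℓ A γ = lamStretch ℓ A B := hSW hγ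
    have h2 : ℓ C γ / ℓ A γ = lamStretch ℓ A C := hout hγ
    have h3 : ℓ B γ / ℓ C γ = lamStretch ℓ C B := hin hγ
    have hmul : lamStretch ℓ A B = lamStretch ℓ A C * lamStretch ℓ C B := by
      rw [← h1, ← h2, ← h3]
      field_simp [(hpos C γ).ne', (hpos A γ).ne']
    rw [hmul, Real.log_mul (ne_of_gt (hlam_pos A C)) (ne_of_gt (hlam_pos C B))]
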